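/- Let V(r) = c₀ + r²/ℓ² + c₂/r² + c₄/r⁴ with constants c₀, c₂, c₄ and ℓ > 0. Then V satisfies the fifth-order ODE 3r⁴VV⁽⁵⁾ + 6r⁴V'V⁽⁴⁾ + 30r³VV⁽⁴⁾ + 44r³V'V⁽³⁾ + r²(47V − 32)V⁽³⁾ + 8r³(V'')² − 3r(13V + 32)V'' + 26r²V'V'' − 34r(V')² + 3V'(13V + 32) = 0 on (0, ∞) if and only if c₂² = 3(c₀ − 1)c₄. -/

import Mathlib

set_option maxHeartbeats 1600000


/-- The fifth-order supersymmetry ODE (4.14) as an expression in `V` and `r`. -/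
noncomputable def ODE5 (V : ℝ → ℝ) (r : ℝ) : ℝ :=
  3 * r ^ 4 * V r * iteratedDeriv 5 V r + 6 * r ^ 4 * deriv V r * iteratedDeriv 4 V r
    + 30 * r ^ 3 * V r * iteratedDeriv 4 V r + 44 * r ^ 3 * deriv V r * iteratedDeriv 3 V r
    + r ^ 2 * (47 * V r - 32) * iteratedDeriv 3 V r + 8 * r ^ 3 * (iteratedDeriv 2 V r) ^ 2
    - 3 * r * (13 * V r + 32) * iteratedDeriv 2 V r + 26 * r ^ 2 * deriv V r * iteratedDeriv 2 V r
    - 34 * r * (deriv V r) ^ 2 + 3 * deriv V r * (13 * V r + 32)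

namespace SUSY414

/-- Derivative of `c / r ^ n` away from zero. -/
lemma hasDerivAt_div_pow (c : ℝ) (n : ℕ) {x : ℝ} (hx : x ≠ 0) :
    HasDerivAt (fun r : ℝ => c / r ^ n) (-(n * c) / x ^ (n + 1)) x := by
  have h := (hasDerivAt_zpow (-(n : ℤ)) x (Or.inl hx)).const_mul c
  have hf : (fun r : ℝ => c * r ^ (-(n : ℤ))) = fun r : ℝ => c / r ^ n := by
    funext r
    rw [zpow_neg, zpow_natCast, div_eq_mul_inv]
  rw [hf] at h
  refine h.congr_deriv (Eq.symm ?_)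
  rw [show (-(n : ℤ) - 1) = -((n : ℤ) + 1) by ring, zpow_neg,
    show ((n : ℤ) + 1) = ((n + 1 : ℕ) : ℤ) by push_cast; ring, zpow_natCast]
  push_cast
  field_simp

/-- Derivative of `c * r ^ n`. -/
lemma hasDerivAt_mul_pow (c : ℝ) (n : ℕ) (x : ℝ) :
    HasDerivAt (fun r : ℝ => c * r ^ n) (c * n * x ^ (n - 1)) x := by
  have h := (hasDerivAt_pow n x).const_mul c
  refine h.congr_deriv (Eq.symm ?_)
  ring

end SUSY414

/-- `V = c₀ + r²/ℓ² + c₂/r² + c₄/r⁴` solves the fifth-order supersymmetry ODE on `(0, ∞)`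
if and only if `c₂² = 3(c₀ − 1)c₄`. -/
theorem stmt_4 (c₀ c₂ c₄ ℓ : ℝ) (hℓ : 0 < ℓ) :
    (∀ r ∈ Set.Ioi (0 : ℝ),
        ODE5 (fun r => c₀ + r ^ 2 / ℓ ^ 2 + c₂ / r ^ 2 + c₄ / r ^ 4) r = 0) ↔
      c₂ ^ 2 = 3 * (c₀ - 1) * c₄ := by
  set s : ℝ := (ℓ ^ 2)⁻¹ with hs
  set W0 : ℝ → ℝ := fun r => c₀ + s * r ^ 2 + c₂ / r ^ 2 + c₄ / r ^ 4 with hW0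
  have hVW : (fun r : ℝ => c₀ + r ^ 2 / ℓ ^ 2 + c₂ / r ^ 2 + c₄ / r ^ 4) = W0 := by
    funext r
    simp only [hW0]
    ring
  set W1 : ℝ → ℝ := fun r => 2 * s * r ^ 1 + (-2 * c₂) / r ^ 3 + (-4 * c₄) / r ^ 5 with hW1
  set W2 : ℝ → ℝ := fun r => 2 * s + 6 * c₂ / r ^ 4 + 20 * c₄ / r ^ 6 with hW2
  set W3 : ℝ → ℝ := fun r => (-24 * c₂) / r ^ 5 + (-120 * c₄) / r ^ 7 with hW3
  set W4 : ℝ → ℝ := fun r => 120 * c₂ / r ^ 6 + 840 * c₄ / r ^ 8 with hW4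
  set W5 : ℝ → ℝ := fun r => (-720 * c₂) / r ^ 7 + (-6720 * c₄) / r ^ 9 with hW5
  have hd0 : ∀ x : ℝ, x ≠ 0 → HasDerivAt W0 (W1 x) x := by
    intro x hx
    have h := (((hasDerivAt_const x c₀).add (SUSY414.hasDerivAt_mul_pow s 2 x)).add
      (SUSY414.hasDerivAt_div_pow c₂ 2 hx)).add (SUSY414.hasDerivAt_div_pow c₄ 4 hx)
    refine h.congr_deriv (Eq.symm ?_)
    simp only [hW1]
    push_cast
    field_simp
    try ring
    try tauto
  have hd1 : ∀ x : ℝ, x ≠ 0 → HasDerivAt W1 (W2 x) x := by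
    intro x hx
    have h := ((SUSY414.hasDerivAt_mul_pow (2 * s) 1 x).add
      (SUSY414.hasDerivAt_div_pow (-2 * c₂) 3 hx)).add
      (SUSY414.hasDerivAt_div_pow (-4 * c₄) 5 hx)
    refine h.congr_deriv (Eq.symm ?_)
    simp only [hW2]
    push_cast
    field_simp
    try ring
    try tauto
  have hd2 : ∀ x : ℝ, x ≠ 0 → HasDerivAt W2 (W3 x) x := by
    intro x hx
    have h := ((hasDerivAt_const x (2 * s)).add
      (SUSY414.hasDerivAt_div_pow (6 * c₂) 4 hx)).add
      (SUSY414.hasDerivAt_div_pow (20 * c₄) 6 hx)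
    refine h.congr_deriv (Eq.symm ?_)
    simp only [hW3]
    push_cast
    field_simp
    try ring
    try tauto
  have hd3 : ∀ x : ℝ, x ≠ 0 → HasDerivAt W3 (W4 x) x := by
    intro x hx
    have h := (SUSY414.hasDerivAt_div_pow (-24 * c₂) 5 hx).add
      (SUSY414.hasDerivAt_div_pow (-120 * c₄) 7 hx)
    refine h.congr_deriv (Eq.symm ?_)
    simp only [hW4]
    push_cast
    field_simp
    try ring
    try tauto
  have hd4 : ∀ x : ℝ, x ≠ 0 → HasDerivAt W4 (W5 x) x := by
    intro x hx
    have h := (SUSY414.hasDerivAt_div_pow (120 * c₂) 6 hx).add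
      (SUSY414.hasDerivAt_div_pow (840 * c₄) 8 hx)
    refine h.congr_deriv (Eq.symm ?_)
    simp only [hW5]
    push_cast
    field_simp
    try ring
    try tauto
  have e1 : ∀ x : ℝ, x ≠ 0 → deriv W0 x = W1 x := fun x hx => (hd0 x hx).deriv
  have e2 : ∀ x : ℝ, x ≠ 0 → deriv W1 x = W2 x := fun x hx => (hd1 x hx).deriv
  have e3 : ∀ x : ℝ, x ≠ 0 → deriv W2 x = W3 x := fun x hx => (hd2 x hx).deriv
  have e4 : ∀ x : ℝ, x ≠ 0 → deriv W3 x = W4 x := fun x hx => (hd3 x hx).deriv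
  have e5 : ∀ x : ℝ, x ≠ 0 → deriv W4 x = W5 x := fun x hx => (hd4 x hx).deriv
  have step : ∀ (F G G' : ℝ → ℝ), (∀ y : ℝ, y ≠ 0 → F y = G y) →
      (∀ y : ℝ, y ≠ 0 → deriv G y = G' y) →
      ∀ x : ℝ, x ≠ 0 → deriv F x = G' x := by
    intro F G G' hFG hG x hx
    have hev : F =ᶠ[nhds x] G := by
      filter_upwards [eventually_ne_nhds hx] with y hy using hFG y hy
    rw [hev.deriv_eq, hG x hx]
  have h2 : ∀ y : ℝ, y ≠ 0 → deriv (deriv W0) y = W2 y := step (deriv W0) W1 W2 e1 e2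
  have h3 : ∀ y : ℝ, y ≠ 0 → deriv (deriv (deriv W0)) y = W3 y :=
    step (deriv (deriv W0)) W2 W3 h2 e3
  have h4 : ∀ y : ℝ, y ≠ 0 → deriv (deriv (deriv (deriv W0))) y = W4 y :=
    step (deriv (deriv (deriv W0))) W3 W4 h3 e4
  have h5 : ∀ y : ℝ, y ≠ 0 → deriv (deriv (deriv (deriv (deriv W0)))) y = W5 y :=
    step (deriv (deriv (deriv (deriv W0)))) W4 W5 h4 e5
  have hval : ∀ x : ℝ, x ≠ 0 →
      ODE5 W0 x = 512 * (c₂ ^ 2 - 3 * (c₀ - 1) * c₄) / x ^ 5 := by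
    intro x hx
    rw [ODE5]
    rw [show iteratedDeriv 5 W0 x = W5 x from by
        simpa [iteratedDeriv_succ, iteratedDeriv_zero] using h5 x hx,
      show iteratedDeriv 4 W0 x = W4 x from by
        simpa [iteratedDeriv_succ, iteratedDeriv_zero] using h4 x hx,
      show iteratedDeriv 3 W0 x = W3 x from by
        simpa [iteratedDeriv_succ, iteratedDeriv_zero] using h3 x hx,
      show iteratedDeriv 2 W0 x = W2 x from by
        simpa [iteratedDeriv_succ, iteratedDeriv_zero] using h2 x hx,
      e1 x hx]
    simp only [hW0, hW1, hW2, hW3, hW4, hW5]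
    field_simp
    ring
  rw [hVW]
  constructor
  · intro h
    have h1 := h 1 (by norm_num)
    rw [hval 1 one_ne_zero] at h1
    nlinarith [h1]
  · intro h r hr
    rw [hval r (ne_of_gt hr), h]
    ring
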